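/- arXiv:2404.08077 — 2 statements merged into one kernel-verified Lean document; each statement's English description precedes it below -/
import Mathlib

section
/- Let u_i, u_{i+1}, u_j, u_{j+1} ∈ S² be in general position (any three linearly independent). The open minor spherical arc from u_i to u_{i+1} intersects the antipodal image of the arc from u_j to u_{j+1} (equivalently, the arc from −u_j to −u_{j+1}) if and only if the four points {u_i, u_{i+1}, u_j, u_{j+1}} are in balanced position, i.e., not contained in any closed hemisphere. Equivalently, this happens if and only if [u_i,u_{i+1},u_j] ≃ [u_i,u_j,u_{j+1}] and both are of sign opposite to [u_i,u_{i+1},u_{j+1}] ≃ [u_{i+1},u_j,u_{j+1}]. -/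
open Matrix

noncomputable section

/-- Determinant of the 3×3 matrix with columns `u`, `v`, `w`. -/
def det3 (u v w : Fin 3 → ℝ) : ℝ :=
  Matrix.det !![u 0, v 0, w 0; u 1, v 1, w 1; u 2, v 2, w 2]

/-- `u` lies on the unit sphere S². -/
def onSphere (u : Fin 3 → ℝ) : Prop := u ⬝ᵥ u = 1

/-- `X` is contained in some closed hemisphere. -/
def InClosedHemisphere (X : Set (Fin 3 → ℝ)) : Prop :=
  ∃ n : Fin 3 → ℝ, n ⬝ᵥ n = 1 ∧ ∀ x ∈ X, 0 ≤ n ⬝ᵥ x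

/-- `X` is balanced: not contained in any closed hemisphere. -/
def BalancedSet (X : Set (Fin 3 → ℝ)) : Prop := ¬ InClosedHemisphere X

/-- Radial projection to the unit sphere. -/
def normalize3 (x : Fin 3 → ℝ) : Fin 3 → ℝ := (Real.sqrt (x ⬝ᵥ x))⁻¹ • x

/-- The open minor geodesic arc from `u` to `v` (endpoints excluded). -/
def openArc (u v : Fin 3 → ℝ) : Set (Fin 3 → ℝ) :=
  {x | ∃ s t : ℝ, 0 < s ∧ 0 < t ∧ x = normalize3 (s • u + t • v)}

/-- The closed minor geodesic arc from `u` to `v`. -/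
def closedArc (u v : Fin 3 → ℝ) : Set (Fin 3 → ℝ) :=
  {x | ∃ s t : ℝ, 0 ≤ s ∧ 0 ≤ t ∧ 0 < s + t ∧ x = normalize3 (s • u + t • v)}

/-! ### Auxiliary machinery -/

/-- cross product -/
def cross3 (u v : Fin 3 → ℝ) : Fin 3 → ℝ :=
  ![u 1 * v 2 - u 2 * v 1, u 2 * v 0 - u 0 * v 2, u 0 * v 1 - u 1 * v 0]

lemma det3_eq (u v w : Fin 3 → ℝ) : det3 u v w =
    u 0 * v 1 * w 2 - u 0 * v 2 * w 1 - u 1 * v 0 * w 2 + u 1 * v 2 * w 0 +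
      u 2 * v 0 * w 1 - u 2 * v 1 * w 0 := by
  simp [det3, Matrix.det_fin_three]; ring

lemma cross_dot (u v w : Fin 3 → ℝ) : cross3 u v ⬝ᵥ w = det3 w u v := by
  simp [cross3, det3_eq, dotProduct, Fin.sum_univ_three]; ring

lemma det3_cyclic (u v w : Fin 3 → ℝ) : det3 u v w = det3 w u v := by
  simp [det3_eq]; ring

lemma det3_self12 (u v : Fin 3 → ℝ) : det3 u u v = 0 := by
  simp [det3_eq]; ring

lemma det3_self13 (u v : Fin 3 → ℝ) : det3 u v u = 0 := by
  simp [det3_eq]; ring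

lemma det3_swap23 (u v w : Fin 3 → ℝ) : det3 u v w = - det3 u w v := by
  simp [det3_eq]; ring

lemma cramer3_dot (a b c v n : Fin 3 → ℝ) :
    det3 a b c * (n ⬝ᵥ v) =
      det3 v b c * (n ⬝ᵥ a) + det3 a v c * (n ⬝ᵥ b) + det3 a b v * (n ⬝ᵥ c) := by
  simp [det3_eq, dotProduct, Fin.sum_univ_three]; ring

lemma cramer_pid (a b c d : Fin 3 → ℝ) (i : Fin 3) :
    det3 a b c * d i = det3 b c d * a i - det3 a c d * b i + det3 a b d * c i := by
  fin_cases i <;> (simp [det3_eq]; ring)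

lemma det3_ne_zero {a b c : Fin 3 → ℝ} (h : LinearIndependent ℝ ![a, b, c]) :
    det3 a b c ≠ 0 := by
  have h2 : IsUnit (Matrix.of ![a, b, c]) := Matrix.linearIndependent_rows_iff_isUnit.mp h
  have h3 : IsUnit (Matrix.of ![a, b, c]).det := (Matrix.isUnit_iff_isUnit_det _).mp h2
  have h4 : det3 a b c = (Matrix.of ![a, b, c]).det := by
    simp [det3, Matrix.det_fin_three]; ring
  rw [h4]; exact h3.ne_zero

lemma dot_self_pos (v : Fin 3 → ℝ) (h : v ≠ 0) : 0 < v ⬝ᵥ v := by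
  have h0 : ∃ i, v i ≠ 0 := by
    by_contra hc; push_neg at hc; exact h (funext hc)
  have hv : v ⬝ᵥ v = v 0 * v 0 + v 1 * v 1 + v 2 * v 2 := by
    simp [dotProduct, Fin.sum_univ_three]
  obtain ⟨i, hi⟩ := h0
  rw [hv]
  fin_cases i <;> simp at hi <;>
    nlinarith [mul_self_pos.2 hi, mul_self_nonneg (v 0), mul_self_nonneg (v 1),
      mul_self_nonneg (v 2)]

lemma normalize3_unit (v : Fin 3 → ℝ) (h : v ≠ 0) : normalize3 v ⬝ᵥ normalize3 v = 1 := by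
  have hp := dot_self_pos v h
  simp only [normalize3, smul_dotProduct, dotProduct_smul, smul_eq_mul]
  rw [← mul_assoc, ← mul_inv, Real.mul_self_sqrt hp.le]
  exact inv_mul_cancel₀ hp.ne'

lemma normalize3_neg (v : Fin 3 → ℝ) : normalize3 (-v) = - normalize3 v := by
  simp [normalize3, neg_dotProduct, dotProduct_neg, smul_neg]

/-- existence of a positive linear dependence -/
def PosDep (a b c d : Fin 3 → ℝ) : Prop :=
  ∃ α β γ δ : ℝ, 0 < α ∧ 0 < β ∧ 0 < γ ∧ 0 < δ ∧ α • a + β • b + γ • c + δ • d = 0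

lemma comb_ne_zero12 {a b c : Fin 3 → ℝ} (h : LinearIndependent ℝ ![a, b, c])
    {s t : ℝ} (hs : 0 < s) (ht : 0 < t) : s • a + t • b ≠ 0 := by
  intro h0
  have h1 := Fintype.linearIndependent_iff.mp h ![s, t, 0] ?_ 0
  · simp at h1; exact hs.ne' h1
  · simpa [Fin.sum_univ_three] using h0

lemma comb_ne_zero23 {a c d : Fin 3 → ℝ} (h : LinearIndependent ℝ ![a, c, d])
    {s t : ℝ} (hs : 0 < s) (ht : 0 < t) : s • c + t • d ≠ 0 := by
  intro h0
  have h1 := Fintype.linearIndependent_iff.mp h ![0, s, t] ?_ 1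
  · simp at h1; exact hs.ne' h1
  · simpa [Fin.sum_univ_three] using h0

lemma hemi_of {X : Set (Fin 3 → ℝ)} {m : Fin 3 → ℝ} (hm : m ≠ 0)
    (h : ∀ x ∈ X, 0 ≤ m ⬝ᵥ x) : InClosedHemisphere X := by
  refine ⟨normalize3 m, normalize3_unit m hm, fun x hx => ?_⟩
  rw [normalize3, smul_dotProduct, smul_eq_mul]
  exact mul_nonneg (inv_nonneg.2 (Real.sqrt_nonneg _)) (h x hx)

lemma hemi4 {a b c d m : Fin 3 → ℝ} (hm : m ≠ 0) (h1 : 0 ≤ m ⬝ᵥ a) (h2 : 0 ≤ m ⬝ᵥ b)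
    (h3 : 0 ≤ m ⬝ᵥ c) (h4 : 0 ≤ m ⬝ᵥ d) : InClosedHemisphere {a, b, c, d} := by
  refine hemi_of hm ?_
  rintro x hx
  simp only [Set.mem_insert_iff, Set.mem_singleton_iff] at hx
  rcases hx with rfl | rfl | rfl | rfl <;> assumption

lemma nonempty_iff_posdep {a b c d : Fin 3 → ℝ}
    (habc : LinearIndependent ℝ ![a, b, c]) (hacd : LinearIndependent ℝ ![a, c, d]) :
    (openArc a b ∩ (Neg.neg '' openArc c d)).Nonempty ↔ PosDep a b c d := by
  constructor
  · rintro ⟨p, ⟨s, t, hs, ht, hp⟩, q, ⟨s', t', hs', ht', hq⟩, hpq⟩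
    set U := s • a + t • b with hUdef
    set V := s' • c + t' • d with hVdef
    have hUne : U ≠ 0 := comb_ne_zero12 habc hs ht
    have hVne : V ≠ 0 := comb_ne_zero23 hacd hs' ht'
    have hru : 0 < Real.sqrt (U ⬝ᵥ U) := Real.sqrt_pos.mpr (dot_self_pos U hUne)
    have hrv : 0 < Real.sqrt (V ⬝ᵥ V) := Real.sqrt_pos.mpr (dot_self_pos V hVne)
    rw [hp, hq] at hpq
    have heq : normalize3 U = -normalize3 V := hpq.symm
    set lam := Real.sqrt (U ⬝ᵥ U) * (Real.sqrt (V ⬝ᵥ V))⁻¹ with hlam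
    have hlp : 0 < lam := mul_pos hru (inv_pos.2 hrv)
    have hUV : U = -(lam • V) := by
      have h2 := congrArg (fun w : Fin 3 → ℝ => Real.sqrt (U ⬝ᵥ U) • w) heq
      simp only [normalize3] at h2
      rw [smul_smul, mul_inv_cancel₀ hru.ne', one_smul, smul_neg, smul_smul] at h2
      exact h2
    refine ⟨s, t, lam * s', lam * t', hs, ht, mul_pos hlp hs', mul_pos hlp ht', ?_⟩
    have expand : s • a + t • b + (lam * s') • c + (lam * t') • d = U + lam • V := by
      rw [hUdef, hVdef]; module
    rw [expand, hUV]
    exact neg_add_cancel _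
  · rintro ⟨α, β, γ, δ, hα, hβ, hγ, hδ, hsum⟩
    have hUV : α • a + β • b = -(γ • c + δ • d) := by
      have h0 : (α • a + β • b) + (γ • c + δ • d) = 0 := by rw [← add_assoc]; exact hsum
      exact eq_neg_of_add_eq_zero_left h0
    refine ⟨normalize3 (α • a + β • b), ⟨α, β, hα, hβ, rfl⟩,
      ⟨normalize3 (γ • c + δ • d), ⟨γ, δ, hγ, hδ, rfl⟩, ?_⟩⟩
    rw [hUV, normalize3_neg]

lemma posdep_balanced {a b c d : Fin 3 → ℝ} (hD : det3 a b c ≠ 0) (h : PosDep a b c d) :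
    ¬ InClosedHemisphere {a, b, c, d} := by
  rintro ⟨n, hn1, hn⟩
  obtain ⟨α, β, γ, δ, hα, hβ, hγ, hδ, hsum⟩ := h
  have hna : 0 ≤ n ⬝ᵥ a := hn a (by simp)
  have hnb : 0 ≤ n ⬝ᵥ b := hn b (by simp)
  have hnc : 0 ≤ n ⬝ᵥ c := hn c (by simp)
  have hnd : 0 ≤ n ⬝ᵥ d := hn d (by simp)
  have hdot : α * (n ⬝ᵥ a) + β * (n ⬝ᵥ b) + γ * (n ⬝ᵥ c) + δ * (n ⬝ᵥ d) = 0 := by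
    have h2 := congrArg (fun v => n ⬝ᵥ v) hsum
    simpa [dotProduct_add, dotProduct_smul, smul_eq_mul] using h2
  have pa := mul_nonneg hα.le hna
  have pb := mul_nonneg hβ.le hnb
  have pc := mul_nonneg hγ.le hnc
  have pd := mul_nonneg hδ.le hnd
  have ha0 : n ⬝ᵥ a = 0 := by
    have : α * (n ⬝ᵥ a) = 0 := by linarith
    exact (mul_eq_zero.mp this).resolve_left hα.ne'
  have hb0 : n ⬝ᵥ b = 0 := by
    have : β * (n ⬝ᵥ b) = 0 := by linarith
    exact (mul_eq_zero.mp this).resolve_left hβ.ne'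
  have hc0 : n ⬝ᵥ c = 0 := by
    have : γ * (n ⬝ᵥ c) = 0 := by linarith
    exact (mul_eq_zero.mp this).resolve_left hγ.ne'
  have hcr := cramer3_dot a b c n n
  rw [hn1, ha0, hb0, hc0] at hcr
  simp at hcr
  exact hD hcr

lemma posdep_iff_signs {a b c d : Fin 3 → ℝ} (hD : det3 a b c ≠ 0) :
    PosDep a b c d ↔
      (0 < det3 a b c * det3 a c d ∧ 0 < det3 a b d * det3 b c d ∧
        det3 a b c * det3 a b d < 0) := by
  have hD2 : 0 < det3 a b c * det3 a b c := mul_self_pos.mpr hD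
  constructor
  · rintro ⟨α, β, γ, δ, hα, hβ, hγ, hδ, hsum⟩
    have h0 := congrFun hsum 0
    have h1 := congrFun hsum 1
    have h2 := congrFun hsum 2
    simp only [Pi.add_apply, Pi.smul_apply, smul_eq_mul, Pi.zero_apply] at h0 h1 h2
    have k1 : α * det3 a b c + δ * det3 b c d = 0 := by
      rw [det3_eq, det3_eq]
      linear_combination (b 1 * c 2 - b 2 * c 1) * h0 + (b 2 * c 0 - b 0 * c 2) * h1 +
        (b 0 * c 1 - b 1 * c 0) * h2
    have k2 : β * det3 a b c - δ * det3 a c d = 0 := by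
      rw [det3_eq, det3_eq]
      linear_combination (c 1 * a 2 - c 2 * a 1) * h0 + (c 2 * a 0 - c 0 * a 2) * h1 +
        (c 0 * a 1 - c 1 * a 0) * h2
    have k3 : γ * det3 a b c + δ * det3 a b d = 0 := by
      rw [det3_eq, det3_eq]
      linear_combination (a 1 * b 2 - a 2 * b 1) * h0 + (a 2 * b 0 - a 0 * b 2) * h1 +
        (a 0 * b 1 - a 1 * b 0) * h2
    refine ⟨?_, ?_, ?_⟩
    · have e : δ * (det3 a b c * det3 a c d) = β * (det3 a b c * det3 a b c) := by
        linear_combination (-det3 a b c) * k2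
      nlinarith [mul_pos hβ hD2, hδ]
    · have e : (δ * det3 a b d) * (δ * det3 b c d) = (γ * α) * (det3 a b c * det3 a b c) := by
        linear_combination (δ * det3 b c d) * k3 - (γ * det3 a b c) * k1
      nlinarith [mul_pos (mul_pos hγ hα) hD2, mul_pos hδ hδ]
    · have e : δ * (det3 a b c * det3 a b d) = -(γ * (det3 a b c * det3 a b c)) := by
        linear_combination (det3 a b c) * k3
      nlinarith [mul_pos hγ hD2, hδ]
  · rintro ⟨S1, S2, S3⟩
    have hbcd : det3 a b c * det3 b c d < 0 := by
      nlinarith [mul_pos hD2 S2, S3]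
    refine ⟨-(det3 a b c * det3 b c d), det3 a b c * det3 a c d,
      -(det3 a b c * det3 a b d), det3 a b c * det3 a b c,
      by linarith, S1, by linarith, hD2, ?_⟩
    funext i
    simp only [Pi.add_apply, Pi.smul_apply, smul_eq_mul, Pi.zero_apply]
    linear_combination (det3 a b c) * cramer_pid a b c d i

theorem arc_meets_antipodal_arc_iff (a b c d : Fin 3 → ℝ)
    (ha : onSphere a) (hb : onSphere b) (hc : onSphere c) (hd : onSphere d)
    (habc : LinearIndependent ℝ ![a, b, c])
    (habd : LinearIndependent ℝ ![a, b, d])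
    (hacd : LinearIndependent ℝ ![a, c, d])
    (hbcd : LinearIndependent ℝ ![b, c, d]) :
    ((openArc a b ∩ (Neg.neg '' openArc c d)).Nonempty ↔ BalancedSet {a, b, c, d}) ∧
    ((openArc a b ∩ (Neg.neg '' openArc c d)).Nonempty ↔
      (0 < det3 a b c * det3 a c d ∧ 0 < det3 a b d * det3 b c d ∧
        det3 a b c * det3 a b d < 0)) := by
  have hD := det3_ne_zero habc
  have hD2 : 0 < det3 a b c * det3 a b c := mul_self_pos.mpr hD
  have hmain := nonempty_iff_posdep habc hacd
  have hsig := posdep_iff_signs (a := a) (b := b) (c := c) (d := d) hD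
  -- hemisphere constructions from failed sign conditions
  have hemiX : 0 ≤ det3 a b c * det3 b c d → InClosedHemisphere {a, b, c, d} := by
    intro hx
    have dm : ∀ x : Fin 3 → ℝ, (det3 a b c • cross3 b c) ⬝ᵥ x = det3 a b c * det3 x b c := by
      intro x; rw [smul_dotProduct, cross_dot, smul_eq_mul]
    have hma : (det3 a b c • cross3 b c) ⬝ᵥ a = det3 a b c * det3 a b c := dm a
    have hm : (det3 a b c • cross3 b c) ≠ 0 := by
      intro h0
      rw [h0, zero_dotProduct] at hma
      exact hD (mul_self_eq_zero.mp hma.symm)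
    refine hemi4 hm (by rw [hma]; exact hD2.le) ?_ ?_ ?_
    · rw [dm b, det3_self12]; simp
    · rw [dm c, det3_self13]; simp
    · rw [dm d, det3_cyclic d b c, det3_cyclic c d b]; exact hx
  have hemiZ : 0 ≤ det3 a b c * det3 a b d → InClosedHemisphere {a, b, c, d} := by
    intro hz
    have dm : ∀ x : Fin 3 → ℝ, (det3 a b c • cross3 a b) ⬝ᵥ x = det3 a b c * det3 x a b := by
      intro x; rw [smul_dotProduct, cross_dot, smul_eq_mul]
    have hmc : (det3 a b c • cross3 a b) ⬝ᵥ c = det3 a b c * det3 a b c := by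
      rw [dm c, det3_cyclic c a b, det3_cyclic b c a]
    have hm : (det3 a b c • cross3 a b) ≠ 0 := by
      intro h0
      rw [h0, zero_dotProduct] at hmc
      exact hD (mul_self_eq_zero.mp hmc.symm)
    refine hemi4 hm ?_ ?_ (by rw [hmc]; exact hD2.le) ?_
    · rw [dm a, det3_self12]; simp
    · rw [dm b, det3_self13]; simp
    · rw [dm d, det3_cyclic d a b, det3_cyclic b d a]; exact hz
  have hemiY : det3 a b c * det3 a c d ≤ 0 → InClosedHemisphere {a, b, c, d} := by
    intro hy
    have dm : ∀ x : Fin 3 → ℝ, (det3 a b c • cross3 c a) ⬝ᵥ x = det3 a b c * det3 x c a := by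
      intro x; rw [smul_dotProduct, cross_dot, smul_eq_mul]
    have hmb : (det3 a b c • cross3 c a) ⬝ᵥ b = det3 a b c * det3 a b c := by
      rw [dm b, det3_cyclic b c a]
    have hm : (det3 a b c • cross3 c a) ≠ 0 := by
      intro h0
      rw [h0, zero_dotProduct] at hmb
      exact hD (mul_self_eq_zero.mp hmb.symm)
    refine hemi4 hm ?_ (by rw [hmb]; exact hD2.le) ?_ ?_
    · rw [dm a, det3_self13]; simp
    · rw [dm c, det3_self12]; simp
    · rw [dm d, det3_cyclic d c a, det3_swap23 a d c]
      nlinarith [hy]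
  constructor
  · rw [hmain]
    constructor
    · exact fun h => posdep_balanced hD h
    · intro hbal
      apply hsig.mpr
      by_contra hns
      apply hbal
      by_cases hx : 0 ≤ det3 a b c * det3 b c d
      · exact hemiX hx
      by_cases hz : 0 ≤ det3 a b c * det3 a b d
      · exact hemiZ hz
      by_cases hy : det3 a b c * det3 a c d ≤ 0
      · exact hemiY hy
      push_neg at hx hz hy
      refine absurd ⟨hy, ?_, hz⟩ hns
      nlinarith [mul_pos_of_neg_of_neg hz hx, hD2]
  · exact hmain.trans hsig
end
end

section
/- Let Q = [u1,...,un] (n ≥ 4) be a balanced simple spherical polygon on S², with Ess(Q) = 2, and let u_i, u_j denote the two essential vertices. If Q has no self or antipodal intersections, then since u_i and u_j are essential, the polygon Q̃ obtained by deleting both u_i and u_j is contained in an open hemisphere, and the spherical convex hulls of Q̃ and its antipodal image −Q̃ are disjoint. -/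
open Matrix

noncomputable section

/-- The `i`-th edge of the closed spherical polygon with vertices `u`. -/
def edge {n : ℕ} (u : ZMod n → Fin 3 → ℝ) (i : ZMod n) : Set (Fin 3 → ℝ) :=
  closedArc (u i) (u (i + 1))

/-- No three vertices lie on a common great circle. -/
def GeneralPosition {n : ℕ} (u : ZMod n → Fin 3 → ℝ) : Prop :=
  ∀ i j k : ZMod n, i ≠ j → j ≠ k → i ≠ k → det3 (u i) (u j) (u k) ≠ 0

/-- Edges `i` and `j` are nonadjacent. -/
def Nonadjacent {n : ℕ} (i j : ZMod n) : Prop := j ≠ i ∧ j ≠ i + 1 ∧ i ≠ j + 1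

/-- The polygon is simple: nonadjacent edges do not intersect. -/
def SimplePolygon {n : ℕ} (u : ZMod n → Fin 3 → ℝ) : Prop :=
  ∀ i j : ZMod n, Nonadjacent i j → edge u i ∩ edge u j = ∅

/-- A spherical inflection at index `i`. -/
def Inflection {n : ℕ} (u : ZMod n → Fin 3 → ℝ) (i : ZMod n) : Prop :=
  det3 (u (i - 1)) (u i) (u (i + 1)) * det3 (u i) (u (i + 1)) (u (i + 2)) < 0

/-- Number of spherical inflections of the polygon. -/
def inflectionCount {n : ℕ} (u : ZMod n → Fin 3 → ℝ) : ℕ :=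
  Nat.card {i : ZMod n // Inflection u i}

/-- Number of self-intersections: unordered pairs of nonadjacent edges that meet. -/
def selfIntersectionCount {n : ℕ} (u : ZMod n → Fin 3 → ℝ) : ℕ :=
  Nat.card {p : ZMod n × ZMod n //
    Nonadjacent p.1 p.2 ∧ (edge u p.1 ∩ edge u p.2).Nonempty} / 2

/-- Number of antipodal intersections: unordered pairs of distinct edges such that
one meets the antipodal image of the other. -/
def antipodalIntersectionCount {n : ℕ} (u : ZMod n → Fin 3 → ℝ) : ℕ :=
  Nat.card {p : ZMod n × ZMod n //
    p.1 ≠ p.2 ∧ (edge u p.1 ∩ (Neg.neg '' edge u p.2)).Nonempty} / 2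

/-- Vertex `i` is essential: the remaining vertices lie in a common closed hemisphere. -/
def EssentialVertex {n : ℕ} (u : ZMod n → Fin 3 → ℝ) (i : ZMod n) : Prop :=
  InClosedHemisphere {x | ∃ j, j ≠ i ∧ x = u j}

/-- Spherical convex hull: radial projection to S² of the convex hull in ℝ³. -/
def sHull (X : Set (Fin 3 → ℝ)) : Set (Fin 3 → ℝ) :=
  {y | ∃ x ∈ convexHull ℝ X, x ≠ 0 ∧ y = normalize3 x}

section Aux

lemma dot3_self_pos {x : Fin 3 → ℝ} (hx : x ≠ 0) : 0 < x ⬝ᵥ x := by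
  have h0 : 0 ≤ x ⬝ᵥ x := Finset.sum_nonneg fun k _ => mul_self_nonneg _
  rcases h0.lt_or_eq with h | h
  · exact h
  · exact absurd (dotProduct_self_eq_zero.mp h.symm) hx

lemma normalize3_of_unit {x : Fin 3 → ℝ} (h : x ⬝ᵥ x = 1) : normalize3 x = x := by
  simp [normalize3, h]

lemma self_mem_edge {n : ℕ} (u : ZMod n → Fin 3 → ℝ) (hs : ∀ i, onSphere (u i)) (a : ZMod n) :
    u a ∈ edge u a := by
  exact ⟨1, 0, by norm_num, by norm_num, by norm_num,
    by rw [one_smul, zero_smul, add_zero, normalize3_of_unit (hs a)]⟩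

lemma no_antipodal {n : ℕ} (u : ZMod n → Fin 3 → ℝ) (hs : ∀ i, onSphere (u i))
    (hanti : ∀ i j : ZMod n, i ≠ j → edge u i ∩ (Neg.neg '' edge u j) = ∅)
    (a b : ZMod n) : u a ≠ - u b := by
  intro h
  have hab : a ≠ b := by
    rintro rfl
    have h0 : u a = 0 := by
      funext k
      have hk := congrFun h k
      simp only [Pi.neg_apply] at hk
      simp only [Pi.zero_apply]
      linarith
    have h1 : (0 : Fin 3 → ℝ) ⬝ᵥ (0 : Fin 3 → ℝ) = 1 := by rw [← h0]; exact hs a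
    simp at h1
  have hmem : u a ∈ edge u a ∩ (Neg.neg '' edge u b) := by
    refine ⟨self_mem_edge u hs a, ⟨u b, self_mem_edge u hs b, ?_⟩⟩
    exact h.symm
  rw [hanti a b hab] at hmem
  exact hmem

lemma det3_eq_zero_of_orth {nv a b c : Fin 3 → ℝ} (hnv : nv ≠ 0)
    (ha : nv ⬝ᵥ a = 0) (hb : nv ⬝ᵥ b = 0) (hc : nv ⬝ᵥ c = 0) : det3 a b c = 0 := by
  by_contra hdet
  set A : Matrix (Fin 3) (Fin 3) ℝ :=
    !![a 0, b 0, c 0; a 1, b 1, c 1; a 2, b 2, c 2] with hA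
  have hunit : IsUnit A := (Matrix.isUnit_iff_isUnit_det A).mpr (isUnit_iff_ne_zero.mpr hdet)
  obtain ⟨x, hx⟩ := Matrix.mulVec_surjective_iff_isUnit.mpr hunit nv
  have hexp : nv = x 0 • a + x 1 • b + x 2 • c := by
    funext k
    have hk := congrFun hx k
    fin_cases k <;>
      simp [hA, Matrix.mulVec, dotProduct, Fin.sum_univ_three, Matrix.vecHead, Matrix.vecTail] at hk ⊢ <;>
      linarith [hk]
  have hzero : nv ⬝ᵥ nv = 0 := by
    have h2 : nv ⬝ᵥ nv = nv ⬝ᵥ (x 0 • a + x 1 • b + x 2 • c) := by rw [← hexp]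
    rw [dotProduct_add, dotProduct_add, dotProduct_smul,
      dotProduct_smul, dotProduct_smul, ha, hb, hc] at h2
    simpa using h2
  exact hnv (dotProduct_self_eq_zero.mp hzero)

lemma zero_not_mem_hull {n : ℕ} (u : ZMod n → Fin 3 → ℝ) (hs : ∀ i, onSphere (u i))
    (hgp : GeneralPosition u)
    (hna : ∀ a b : ZMod n, u a ≠ - u b)
    (i j : ZMod n)
    (nv : Fin 3 → ℝ) (hnv : nv ⬝ᵥ nv = 1)
    (hhemi : ∀ l, l ≠ i → 0 ≤ nv ⬝ᵥ u l) :
    (0 : Fin 3 → ℝ) ∉ convexHull ℝ {x | ∃ l, l ≠ i ∧ l ≠ j ∧ x = u l} := by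
  classical
  intro h0
  rw [convexHull_eq] at h0
  obtain ⟨ι, t, w, z, hw0, hw1, hz, hcm⟩ := h0
  have hnv0 : nv ≠ 0 := by
    intro h; rw [h] at hnv; simp at hnv
  set t' := t.filter (fun k => w k ≠ 0) with ht'
  have hw1' : ∑ k ∈ t', w k = 1 := by
    rw [ht', Finset.sum_filter_ne_zero]; exact hw1
  have hcm' : t'.centerMass w z = 0 := by
    rw [ht', Finset.centerMass_filter_ne_zero]; exact hcm
  have hsum : ∑ k ∈ t', w k • z k = 0 := by
    rw [← Finset.centerMass_eq_of_sum_1 _ _ hw1']; exact hcm'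
  -- properties of support points
  have hprop : ∀ k ∈ t', ∃ l : ZMod n, l ≠ i ∧ l ≠ j ∧ z k = u l := by
    intro k hk
    exact hz k (Finset.mem_filter.mp hk).1
  have hwpos : ∀ k ∈ t', 0 < w k := by
    intro k hk
    rcases Finset.mem_filter.mp hk with ⟨hkt, hk0⟩
    exact lt_of_le_of_ne (hw0 k hkt) (Ne.symm hk0)
  -- dot products vanish on the support
  let F : (Fin 3 → ℝ) →ₗ[ℝ] ℝ :=
    { toFun := fun x => nv ⬝ᵥ x
      map_add' := fun x y => dotProduct_add nv x y
      map_smul' := fun c x => by simp [dotProduct_smul] }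
  have hdotsum : ∑ k ∈ t', w k * (nv ⬝ᵥ z k) = 0 := by
    have h1 : F (∑ k ∈ t', w k • z k) = 0 := by rw [hsum]; simp
    rw [map_sum] at h1
    simpa [F] using h1
  have horth : ∀ k ∈ t', nv ⬝ᵥ z k = 0 := by
    intro k hk
    have hall := (Finset.sum_eq_zero_iff_of_nonneg ?_).mp hdotsum k hk
    · rcases mul_eq_zero.mp hall with h | h
      · exact absurd h (ne_of_gt (hwpos k hk))
      · exact h
    · intro k hk
      obtain ⟨l, hli, _, hzl⟩ := hprop k hk
      exact mul_nonneg (hwpos k hk).le (by rw [hzl]; exact hhemi l hli)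
  -- the support set of vectors
  set S : Finset (Fin 3 → ℝ) := t'.image z with hS
  have hSprop : ∀ s ∈ S, (nv ⬝ᵥ s = 0) ∧ ∃ l : ZMod n, l ≠ i ∧ l ≠ j ∧ s = u l := by
    intro s hsS
    obtain ⟨k, hk, rfl⟩ := Finset.mem_image.mp hsS
    exact ⟨horth k hk, hprop k hk⟩
  have h0S : (0 : Fin 3 → ℝ) ∈ convexHull ℝ (S : Set (Fin 3 → ℝ)) := by
    rw [← hcm']
    exact Finset.centerMass_mem_convexHull t' (fun k hk => (hwpos k hk).le)
      (by rw [hw1']; norm_num)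
      (fun k hk => Finset.mem_coe.mpr (Finset.mem_image_of_mem z hk))
  rcases lt_or_ge 2 S.card with h3 | h2
  · -- three distinct support vectors : all orthogonal to nv, contradicting general position
    obtain ⟨a, b, c, haS, hbS, hcS, hab, hac, hbc⟩ := Finset.two_lt_card_iff.mp h3
    obtain ⟨hoa, la, _, _, hla⟩ := hSprop a haS
    obtain ⟨hob, lb, _, _, hlb⟩ := hSprop b hbS
    obtain ⟨hoc, lc, _, _, hlc⟩ := hSprop c hcS
    have h1 : la ≠ lb := fun h => hab (by rw [hla, hlb, h])
    have h2 : lb ≠ lc := fun h => hbc (by rw [hlb, hlc, h])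
    have h3' : la ≠ lc := fun h => hac (by rw [hla, hlc, h])
    exact hgp la lb lc h1 h2 h3'
      (by rw [← hla, ← hlb, ← hlc]; exact det3_eq_zero_of_orth hnv0 hoa hob hoc)
  · -- at most two support vectors
    interval_cases h : S.card
    · rw [Finset.card_eq_zero.mp h] at h0S
      simpa using h0S
    · obtain ⟨a, ha⟩ := Finset.card_eq_one.mp h
      rw [ha] at h0S
      simp only [Finset.coe_singleton, convexHull_singleton, Set.mem_singleton_iff] at h0S
      obtain ⟨_, l, _, _, hl⟩ := hSprop a (by rw [ha]; exact Finset.mem_singleton_self a)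
      have h1 : (0 : Fin 3 → ℝ) ⬝ᵥ (0 : Fin 3 → ℝ) = 1 := by
        rw [h0S, hl]; exact hs l
      simp at h1
    · obtain ⟨a, b, hab, hSab⟩ := Finset.card_eq_two.mp h
      rw [hSab] at h0S
      have hco : ((({a, b} : Finset (Fin 3 → ℝ)) : Set (Fin 3 → ℝ))) = {a, b} := by simp
      rw [hco, convexHull_pair] at h0S
      obtain ⟨p, q, hp, hq, hpq, hpqz⟩ := h0S
      obtain ⟨_, la, _, _, hla⟩ := hSprop a (by rw [hSab]; simp)
      obtain ⟨_, lb, _, _, hlb⟩ := hSprop b (by rw [hSab]; simp)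
      have ha1 : a ⬝ᵥ a = 1 := by rw [hla]; exact hs la
      have hb1 : b ⬝ᵥ b = 1 := by rw [hlb]; exact hs lb
      have hdab : b ⬝ᵥ a = a ⬝ᵥ b := dotProduct_comm b a
      have hda : p * (a ⬝ᵥ a) + q * (a ⬝ᵥ b) = 0 := by
        have h' : a ⬝ᵥ (p • a + q • b) = 0 := by rw [hpqz]; simp
        rwa [dotProduct_add, dotProduct_smul, dotProduct_smul,
          smul_eq_mul, smul_eq_mul] at h'
      have hdb : p * (b ⬝ᵥ a) + q * (b ⬝ᵥ b) = 0 := by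
        have h' : b ⬝ᵥ (p • a + q • b) = 0 := by rw [hpqz]; simp
        rwa [dotProduct_add, dotProduct_smul, dotProduct_smul,
          smul_eq_mul, smul_eq_mul] at h'
      rw [ha1] at hda
      rw [hdab, hb1] at hdb
      -- p + q * d = 0 and p * d + q = 0 with p + q = 1, p,q ≥ 0
      have hp' : 0 < p := by
        rcases hp.lt_or_eq with h' | h'
        · exact h'
        · exfalso; rw [← h'] at hda; nlinarith
      have hq' : 0 < q := by
        rcases hq.lt_or_eq with h' | h'
        · exact h'
        · exfalso; rw [← h'] at hda; nlinarith
      have hd : a ⬝ᵥ b = -1 := by nlinarith [sq_nonneg (p - q)]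
      have hab0 : (a + b) ⬝ᵥ (a + b) = 0 := by
        rw [add_dotProduct, dotProduct_add, dotProduct_add,
          ha1, hb1, hd, hdab, hd]
        ring
      have hba : b = -a := eq_neg_of_add_eq_zero_right (dotProduct_self_eq_zero.mp hab0)
      exact hna lb la (by rw [← hlb, hba, hla])

end Aux

theorem two_essential_hulls_disjoint (n : ℕ) (hn : 4 ≤ n)
    (u : ZMod n → Fin 3 → ℝ)
    (hs : ∀ i, onSphere (u i)) (hgp : GeneralPosition u)
    (hb : BalancedSet (Set.range u)) (hsimple : SimplePolygon u)
    (hanti : ∀ i j : ZMod n, i ≠ j → edge u i ∩ (Neg.neg '' edge u j) = ∅)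
    (i j : ZMod n) (hij : i ≠ j)
    (hei : EssentialVertex u i) (hej : EssentialVertex u j)
    (honly : ∀ l : ZMod n, EssentialVertex u l → l = i ∨ l = j) :
    (∃ m : Fin 3 → ℝ, m ⬝ᵥ m = 1 ∧ ∀ l : ZMod n, l ≠ i → l ≠ j → 0 < m ⬝ᵥ u l) ∧
    sHull {x | ∃ l, l ≠ i ∧ l ≠ j ∧ x = u l} ∩
      sHull (Neg.neg '' {x | ∃ l, l ≠ i ∧ l ≠ j ∧ x = u l}) = ∅ := by
  classical
  haveI : NeZero n := ⟨by omega⟩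
  have hna : ∀ a b : ZMod n, u a ≠ - u b := no_antipodal u hs hanti
  obtain ⟨nv, hnv, hhemi0⟩ := hei
  have hhemi : ∀ l, l ≠ i → 0 ≤ nv ⬝ᵥ u l := fun l hl => hhemi0 (u l) ⟨l, hl, rfl⟩
  have h0 : (0 : Fin 3 → ℝ) ∉ convexHull ℝ {x | ∃ l, l ≠ i ∧ l ≠ j ∧ x = u l} :=
    zero_not_mem_hull u hs hgp hna i j nv hnv hhemi
  set X : Set (Fin 3 → ℝ) := {x | ∃ l, l ≠ i ∧ l ≠ j ∧ x = u l} with hXdef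
  have hXfin : X.Finite :=
    Set.Finite.subset (Set.finite_range u) (by rintro x ⟨l, _, _, rfl⟩; exact ⟨l, rfl⟩)
  have hcls : IsClosed (convexHull ℝ X) := (hXfin.isCompact_convexHull ℝ).isClosed
  obtain ⟨f, c, hfc, hfb⟩ :=
    geometric_hahn_banach_point_closed (convex_convexHull ℝ X) hcls h0
  have hc0 : 0 < c := by simpa using hfc
  set m0 : Fin 3 → ℝ := fun k => f (Pi.single k 1) with hm0
  have hfd : ∀ x : Fin 3 → ℝ, f x = m0 ⬝ᵥ x := by
    intro x
    have hx : x = ∑ k : Fin 3, x k • (Pi.single k 1 : Fin 3 → ℝ) := by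
      funext l
      simp [Finset.sum_apply, Pi.single_apply]
    calc f x = f (∑ k : Fin 3, x k • (Pi.single k 1 : Fin 3 → ℝ)) := by rw [← hx]
      _ = ∑ k : Fin 3, x k • f (Pi.single k 1 : Fin 3 → ℝ) := by
          rw [map_sum]; simp
      _ = m0 ⬝ᵥ x := by
          simp [hm0, dotProduct, mul_comm]
  have hhull : ∀ x ∈ convexHull ℝ X, 0 < m0 ⬝ᵥ x := by
    intro x hx
    rw [← hfd]
    exact hc0.trans (hfb x hx)
  have hpos : ∀ l, l ≠ i → l ≠ j → 0 < m0 ⬝ᵥ u l := fun l h1 h2 =>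
    hhull _ (subset_convexHull ℝ X ⟨l, h1, h2, rfl⟩)
  have hex : ∃ l0 : ZMod n, l0 ≠ i ∧ l0 ≠ j := by
    by_contra hcon
    push_neg at hcon
    have hsub : (Finset.univ : Finset (ZMod n)) ⊆ {i, j} := by
      intro l _
      rcases eq_or_ne l i with rfl | hl
      · simp
      · simp [hcon l hl]
    have h2 : Fintype.card (ZMod n) ≤ 2 := by
      calc Fintype.card (ZMod n) = (Finset.univ : Finset (ZMod n)).card := by
            rw [Finset.card_univ]
        _ ≤ ({i, j} : Finset (ZMod n)).card := Finset.card_le_card hsub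
        _ ≤ 2 := Finset.card_insert_le _ _ |>.trans (by simp)
    rw [ZMod.card n] at h2
    omega
  obtain ⟨l0, hl0i, hl0j⟩ := hex
  have hm0ne : m0 ≠ 0 := by
    intro hzero
    have := hpos l0 hl0i hl0j
    rw [hzero] at this
    simp at this
  have hq : 0 < m0 ⬝ᵥ m0 := dot3_self_pos hm0ne
  have hsq : 0 < Real.sqrt (m0 ⬝ᵥ m0) := Real.sqrt_pos.mpr hq
  set m : Fin 3 → ℝ := normalize3 m0 with hmdef
  have hmd : ∀ x : Fin 3 → ℝ, m ⬝ᵥ x = (Real.sqrt (m0 ⬝ᵥ m0))⁻¹ * (m0 ⬝ᵥ x) := by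
    intro x
    rw [hmdef]
    simp [normalize3, smul_dotProduct]
  have hmunit : m ⬝ᵥ m = 1 := by
    rw [hmd, hmdef]
    simp only [normalize3, dotProduct_smul, smul_eq_mul]
    rw [← mul_assoc, ← mul_inv, Real.mul_self_sqrt hq.le]
    exact inv_mul_cancel₀ (ne_of_gt hq)
  have hmpos : ∀ l : ZMod n, l ≠ i → l ≠ j → 0 < m ⬝ᵥ u l := by
    intro l h1 h2
    rw [hmd]
    exact mul_pos (inv_pos.mpr hsq) (hpos l h1 h2)
  refine ⟨⟨m, hmunit, hmpos⟩, ?_⟩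
  -- disjointness of the spherical hulls
  have hlin : IsLinearMap ℝ (fun x : Fin 3 → ℝ => m ⬝ᵥ x) :=
    ⟨fun x y => dotProduct_add m x y, fun c x => by
      simp [dotProduct_smul]⟩
  have hhullpos : ∀ x ∈ convexHull ℝ X, 0 < m ⬝ᵥ x := by
    intro x hx
    exact convexHull_min (fun y hy => by
      obtain ⟨l, h1, h2, rfl⟩ := hy
      exact hmpos l h1 h2) (convex_halfSpace_gt hlin 0) hx
  have hhullneg : ∀ x ∈ convexHull ℝ (Neg.neg '' X), m ⬝ᵥ x < 0 := by
    intro x hx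
    exact convexHull_min (fun y hy => by
      obtain ⟨y', ⟨l, h1, h2, rfl⟩, rfl⟩ := hy
      have hp := hmpos l h1 h2
      show m ⬝ᵥ (-(u l)) < 0
      rw [dotProduct_neg]
      linarith) (convex_halfSpace_lt hlin 0) hx
  ext y
  simp only [Set.mem_inter_iff, Set.mem_empty_iff_false, iff_false]
  rintro ⟨⟨x1, hx1, hx1ne, rfl⟩, ⟨x2, hx2, hx2ne, hy2⟩⟩
  have hs1 : 0 < Real.sqrt (x1 ⬝ᵥ x1) := Real.sqrt_pos.mpr (dot3_self_pos hx1ne)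
  have hs2 : 0 < Real.sqrt (x2 ⬝ᵥ x2) := Real.sqrt_pos.mpr (dot3_self_pos hx2ne)
  have hd1 : 0 < m ⬝ᵥ normalize3 x1 := by
    rw [normalize3, dotProduct_smul, smul_eq_mul]
    exact mul_pos (inv_pos.mpr hs1) (hhullpos x1 hx1)
  have hd2 : m ⬝ᵥ normalize3 x2 < 0 := by
    rw [normalize3, dotProduct_smul, smul_eq_mul]
    exact mul_neg_of_pos_of_neg (inv_pos.mpr hs2) (hhullneg x2 hx2)
  rw [← hy2] at hd2
  linarith
end
end
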